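/- arXiv:1910.08647 — 2 statements merged into one kernel-verified Lean document; each statement's English description precedes it below -/
import Mathlib

section
/- For any security game (D, {A_d}_{d∈D}, π), any action d ∈ D of the defender, any response action a ∈ A_d of the attacker, and any formula φ of the extended language Φ⁺, we have (d,a) ⊨ Dφ if and only if (d,a) ⊨ φ ∧ ¬N(¬φ → A¬φ). -/
/-- Formulae of the extended language Φ⁺: propositional variables, negation,
implication, the necessity modality `N` (`nec`), the attacker's blameworthiness
modality `A` (`blame`), and the defender's blameworthiness modality `D` (`dblame`). -/
inductive Formula : Type
  | var : ℕ → Formula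
  | neg : Formula → Formula
  | imp : Formula → Formula → Formula
  | nec : Formula → Formula
  | blame : Formula → Formula
  | dblame : Formula → Formula

namespace Formula

/-- Conjunction, defined through `→` and `¬` in the standard way. -/
def conj (φ ψ : Formula) : Formula := neg (imp φ (neg ψ))

end Formula

/-- A security game: a set `D` of actions of the defender; for each `d ∈ D` a
nonempty set `A d` of actions of the attacker in response to `d`; and a valuation
assigning to each propositional variable a set of action profiles `(d, a)`. -/
structure SecurityGame where
  D : Type
  A : D → Type
  nonempty : ∀ d, Nonempty (A d)
  val : ℕ → ∀ d : D, A d → Prop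

/-- The satisfaction relation `(d, a) ⊨ φ` of a security game, for the extended
language Φ⁺. -/
def Sat (G : SecurityGame) : Formula → ∀ d : G.D, G.A d → Prop
  | .var p, d, a => G.val p d a
  | .neg φ, d, a => ¬ Sat G φ d a
  | .imp φ ψ, d, a => Sat G φ d a → Sat G ψ d a
  | .nec φ, _, _ => ∀ (d' : G.D) (a' : G.A d'), Sat G φ d' a'
  | .blame φ, d, a => Sat G φ d a ∧ ∃ a' : G.A d, ¬ Sat G φ d a'
  | .dblame φ, d, a => Sat G φ d a ∧ ∃ d' : G.D, ∀ a' : G.A d', ¬ Sat G φ d' a'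

/-- For any security game, any action `d` of the defender, any response action `a`
of the attacker, and any formula `φ` of the extended language Φ⁺:
`(d,a) ⊨ D φ` if and only if `(d,a) ⊨ φ ∧ ¬N(¬φ → A ¬φ)`. -/
theorem dblame_iff (G : SecurityGame) (d : G.D) (a : G.A d) (φ : Formula) :
    Sat G φ.dblame d a ↔
      Sat G (φ.conj ((((φ.neg).imp ((φ.neg).blame)).nec).neg)) d a := by
  simp only [Formula.conj, Sat, not_and, not_exists, not_forall, not_not]
  constructor
  · rintro ⟨hφ, d', hd'⟩
    rcases G.nonempty d' with ⟨a0⟩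
    exact ⟨hφ, d', a0, hd' a0, fun _ => hd'⟩
  · rintro ⟨hφ, d', a', hna, h⟩
    exact ⟨hφ, d', h hna⟩
end

section
/- For any security game (D, {A_d}_{d∈D}, π), any formula φ of the extended language Φ⁺, any defender's action d ∈ D, and any attacker's response action a ∈ A_d, we have (d,a) ⊨ Dφ → N(φ → Dφ). (That is, the Fairness axiom is sound for the defender's blameworthiness modality D in security games.) -/
/-- Soundness of the Fairness axiom for the defender's blameworthiness modality `D`
in security games: `(d,a) ⊨ D φ → N(φ → D φ)`. -/
theorem fairness_sound (G : SecurityGame) (φ : Formula) (d : G.D) (a : G.A d) :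
    Sat G ((φ.dblame).imp ((φ.imp φ.dblame).nec)) d a := by
  rintro ⟨hφ, d', h⟩ d'' a'' h'
  exact ⟨h', d', h⟩
end
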